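/- Fix integers d, P ≥ 1, m ≥ 2 even, and M ≥ 1. Let μ₁, μ₂ ∈ ℝ^d be unit vectors with μ₁ᵀμ₂ = α, and let v₁, …, v_M ∈ ℝ^d be unit vectors orthogonal to both μ₁ and μ₂. Let X ∈ ℝ^{d×P} have s₁ columns equal to μ₁, s₂ columns equal to −μ₁, and its remaining P − s₁ − s₂ columns taken from {v₁, …, v_M}. Let a ∈ ℝ^m have exactly m/2 entries equal to 1/√m and m/2 entries equal to −1/√m, let θ > 0, q ≥ 0 and λ ∈ ℝ, let V ∈ ℝ^{m×d} have i-th row equal to sign(aᵢ)·θ·(μ₁ + λμ₂)ᵀ, and let W := q·(μ₁μ₁ᵀ + λ·μ₂μ₂ᵀ). Then, setting Q := q·(1 + λα²), the one-layer Transformer output satisfies exactly f(X; a, V, W) = ((1 + λα)·θ·√m/(2P))·[ s₁·A₊(Q) + s₂·A₋(Q) + (P − s₁ − s₂)·(s₁ − s₂)/P ], where A₊(Q) = (s₁·e^{Q} − s₂·e^{−Q})/(s₁·e^{Q} + s₂·e^{−Q} + P − s₁ − s₂) and A₋(Q) = (s₁·e^{−Q} − s₂·e^{Q})/(s₁·e^{−Q}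 + s₂·e^{Q} + P − s₁ − s₂). -/
import Mathlib


open Matrix

lemma vecMulVec_mulVec' {d : ℕ} (u w y : Fin d → ℝ) :
    vecMulVec u w *ᵥ y = (w ⬝ᵥ y) • u := by
  funext i
  simp only [vecMulVec_apply, mulVec, dotProduct, Pi.smul_apply, smul_eq_mul,
    Finset.sum_mul]
  exact Finset.sum_congr rfl fun j _ => by ring

lemma dot_sum_smul {d P : ℕ} (μ : Fin d → ℝ) (w : Fin P → ℝ) (x : Fin P → Fin d → ℝ) :
    μ ⬝ᵥ (∑ s, w s • x s) = ∑ s, w s * (μ ⬝ᵥ x s) := by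
  simp only [dotProduct, Finset.sum_apply, Pi.smul_apply, smul_eq_mul, Finset.mul_sum]
  rw [Finset.sum_comm]
  exact Finset.sum_congr rfl fun s _ => Finset.sum_congr rfl fun k _ => by ring

lemma mlp_sum {m : ℕ} (hm : 2 ≤ m) (hme : Even m)
    (a : Fin m → ℝ) (A : Finset (Fin m)) (hA : A.card = m / 2)
    (haA : ∀ i ∈ A, a i = 1 / Real.sqrt m)
    (haA' : ∀ i ∉ A, a i = -(1 / Real.sqrt m)) (c : ℝ) :
    ∑ i, a i * max (Real.sign (a i) * c) 0 = Real.sqrt m / 2 * c := by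
  have hm0 : (0:ℝ) < m := by exact_mod_cast (by omega : 0 < m)
  have hs : (0:ℝ) < Real.sqrt m := Real.sqrt_pos.2 hm0
  obtain ⟨k, hk⟩ := hme
  have hk2 : m = 2 * k := by omega
  have hA2 : A.card = k := by omega
  have hAc : Aᶜ.card = k := by
    have := Finset.card_compl A
    simp [hA2, Fintype.card_fin, hk2] at this ⊢
    omega
  rw [← Finset.sum_add_sum_compl A]
  have h1 : ∀ i ∈ A, a i * max (Real.sign (a i) * c) 0 = (1 / Real.sqrt m) * max c 0 := by
    intro i hi
    rw [haA i hi, Real.sign_of_pos (by positivity), one_mul]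
  have h2 : ∀ i ∈ Aᶜ, a i * max (Real.sign (a i) * c) 0 = -((1 / Real.sqrt m) * max (-c) 0) := by
    intro i hi
    rw [haA' i (Finset.mem_compl.mp hi), Real.sign_of_neg (by simp; positivity)]
    ring_nf
  rw [Finset.sum_congr rfl h1, Finset.sum_congr rfl h2, Finset.sum_const, Finset.sum_const,
    hA2, hAc]
  have hms : Real.sqrt m * Real.sqrt m = m := Real.mul_self_sqrt hm0.le
  have hmax : max c 0 - max (-c) 0 = c := max_zero_sub_max_neg_zero_eq_self c
  have hkm : (k:ℝ) = m / 2 := by rw [hk2]; push_cast; ring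
  rw [nsmul_eq_mul, nsmul_eq_mul, hkm]
  have hconv : (m:ℝ)/2 * (1/Real.sqrt m) = Real.sqrt m / 2 := by
    field_simp
    linarith [hms]
  calc (m:ℝ)/2 * (1/Real.sqrt m * (c ⊔ 0)) + (m:ℝ)/2 * -(1/Real.sqrt m * (-c ⊔ 0))
      = ((m:ℝ)/2 * (1/Real.sqrt m)) * ((c ⊔ 0) - ((-c) ⊔ 0)) := by ring
    _ = Real.sqrt m / 2 * c := by rw [hconv, hmax]

/-- The `s`-th column of `X ∈ ℝ^{d×P}` as a vector. -/
def colVec {d P : ℕ} (X : Matrix (Fin d) (Fin P) ℝ) (s : Fin P) : Fin d → ℝ :=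
  fun k => X k s

/-- Softmax attention weight of key token `s` for query token `l`:
`softmax_l(x_sᵀWx_l) = exp(x_sᵀWx_l) / ∑_r exp(x_rᵀWx_l)`. -/
noncomputable def attnWeight {d P : ℕ} (X : Matrix (Fin d) (Fin P) ℝ)
    (W : Matrix (Fin d) (Fin d) ℝ) (s l : Fin P) : ℝ :=
  Real.exp (colVec X s ⬝ᵥ (W *ᵥ colVec X l)) /
    ∑ r : Fin P, Real.exp (colVec X r ⬝ᵥ (W *ᵥ colVec X l))

/-- One-layer single-head Transformer:
`f(X; a, V, W) = (1/P)·∑_l aᵀ·ReLU(V·∑_s x_s·softmax_l(x_sᵀWx_l))`. -/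
noncomputable def transformer {d P m : ℕ} (a : Fin m → ℝ)
    (V : Matrix (Fin m) (Fin d) ℝ) (W : Matrix (Fin d) (Fin d) ℝ)
    (X : Matrix (Fin d) (Fin P) ℝ) : ℝ :=
  (1 / (P : ℝ)) * ∑ l : Fin P, ∑ i : Fin m,
    a i * max ((V *ᵥ ∑ s : Fin P, attnWeight X W s l • colVec X s) i) 0

/-- exact output of the idealized merged model
`Ψ⁰ + ΔΨ₁ + λΔΨ₂` (attention `W = q(μ₁μ₁ᵀ + λμ₂μ₂ᵀ)`, MLP rows
`sign(aᵢ)·θ·(μ₁ + λμ₂)ᵀ`, `μ₁ᵀμ₂ = α`) on a task-`T₁` sample with `s₁`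
columns `μ₁` and `s₂` columns `−μ₁`: the effective margin factor is `1 + λα`
and the effective attention score is `Q = q(1 + λα²)`. -/
theorem transformer_output_merged_two_tasks {d P m M : ℕ}
    (hd : 1 ≤ d) (hP : 1 ≤ P) (hm : 2 ≤ m) (hme : Even m) (hM : 1 ≤ M)
    (μ₁ μ₂ : Fin d → ℝ) (α : ℝ)
    (hμ₁ : μ₁ ⬝ᵥ μ₁ = 1) (hμ₂ : μ₂ ⬝ᵥ μ₂ = 1) (hα : μ₁ ⬝ᵥ μ₂ = α)
    (v : Fin M → Fin d → ℝ) (hv : ∀ k, v k ⬝ᵥ v k = 1)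
    (hvμ₁ : ∀ k, μ₁ ⬝ᵥ v k = 0) (hvμ₂ : ∀ k, μ₂ ⬝ᵥ v k = 0)
    (s₁ s₂ : ℕ) (S₁ S₂ : Finset (Fin P)) (hdisj : Disjoint S₁ S₂)
    (hS₁ : S₁.card = s₁) (hS₂ : S₂.card = s₂)
    (X : Matrix (Fin d) (Fin P) ℝ)
    (hX₁ : ∀ l ∈ S₁, colVec X l = μ₁)
    (hX₂ : ∀ l ∈ S₂, colVec X l = -μ₁)
    (hX₃ : ∀ l : Fin P, l ∉ S₁ → l ∉ S₂ → ∃ k : Fin M, colVec X l = v k)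
    (a : Fin m → ℝ) (A : Finset (Fin m)) (hA : A.card = m / 2)
    (haA : ∀ i ∈ A, a i = 1 / Real.sqrt m)
    (haA' : ∀ i ∉ A, a i = -(1 / Real.sqrt m))
    (θ : ℝ) (hθ : 0 < θ) (q : ℝ) (hq : 0 ≤ q) (lam : ℝ)
    (V : Matrix (Fin m) (Fin d) ℝ)
    (hV : ∀ i k, V i k = Real.sign (a i) * θ * (μ₁ k + lam * μ₂ k))
    (W : Matrix (Fin d) (Fin d) ℝ)
    (hW : W = q • (vecMulVec μ₁ μ₁ + lam • vecMulVec μ₂ μ₂)) :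
    transformer a V W X =
      ((1 + lam * α) * θ * Real.sqrt m / (2 * (P : ℝ))) *
        ((s₁ : ℝ) *
            (((s₁ : ℝ) * Real.exp (q * (1 + lam * α ^ 2))
                - (s₂ : ℝ) * Real.exp (-(q * (1 + lam * α ^ 2)))) /
              ((s₁ : ℝ) * Real.exp (q * (1 + lam * α ^ 2))
                + (s₂ : ℝ) * Real.exp (-(q * (1 + lam * α ^ 2)))
                + ((P : ℝ) - (s₁ : ℝ) - (s₂ : ℝ)))) +
         (s₂ : ℝ) *
            (((s₁ : ℝ) * Real.exp (-(q * (1 + lam * α ^ 2)))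
                - (s₂ : ℝ) * Real.exp (q * (1 + lam * α ^ 2))) /
              ((s₁ : ℝ) * Real.exp (-(q * (1 + lam * α ^ 2)))
                + (s₂ : ℝ) * Real.exp (q * (1 + lam * α ^ 2))
                + ((P : ℝ) - (s₁ : ℝ) - (s₂ : ℝ)))) +
         ((P : ℝ) - (s₁ : ℝ) - (s₂ : ℝ)) * ((s₁ : ℝ) - (s₂ : ℝ)) / (P : ℝ)) := by
  classical
  have hP0 : (0:ℝ) < P := by exact_mod_cast hP
  set Q := q * (1 + lam * α ^ 2) with hQdef
  set g : Fin P → ℝ := fun l => if l ∈ S₁ then 1 else if l ∈ S₂ then -1 else 0 with hg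
  have hgS₁ : ∀ l ∈ S₁, g l = 1 := fun l hl => by simp [hg, hl]
  have hgS₂ : ∀ l ∈ S₂, g l = -1 := by
    intro l hl
    have h1 : l ∉ S₁ := fun h => (Finset.disjoint_left.mp hdisj h) hl
    simp [hg, h1, hl]
  have hgC : ∀ l ∈ (S₁ ∪ S₂)ᶜ, g l = 0 := by
    intro l hl
    simp only [Finset.mem_compl, Finset.mem_union] at hl
    push_neg at hl
    simp [hg, hl.1, hl.2]
  have hdot1 : ∀ s, μ₁ ⬝ᵥ colVec X s = g s := by
    intro s
    by_cases h1 : s ∈ S₁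
    · rw [hX₁ s h1]; simp [hg, h1, hμ₁]
    · by_cases h2 : s ∈ S₂
      · rw [hX₂ s h2, dotProduct_neg, hμ₁]; simp [hg, h1, h2]
      · obtain ⟨k, hk⟩ := hX₃ s h1 h2
        rw [hk, hvμ₁ k]; simp [hg, h1, h2]
  have hdot2 : ∀ s, μ₂ ⬝ᵥ colVec X s = α * g s := by
    intro s
    have hc : μ₂ ⬝ᵥ μ₁ = α := by rw [dotProduct_comm]; exact hα
    by_cases h1 : s ∈ S₁
    · rw [hX₁ s h1, hc]; simp [hg, h1]
    · by_cases h2 : s ∈ S₂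
      · rw [hX₂ s h2, dotProduct_neg, hc]; simp [hg, h1, h2]
      · obtain ⟨k, hk⟩ := hX₃ s h1 h2
        rw [hk, hvμ₂ k]; simp [hg, h1, h2]
  have hscore : ∀ s l : Fin P, colVec X s ⬝ᵥ (W *ᵥ colVec X l) = Q * (g s * g l) := by
    intro s l
    have hWv : W *ᵥ colVec X l = (q * g l) • μ₁ + (q * (lam * (α * g l))) • μ₂ := by
      rw [hW, smul_mulVec, add_mulVec, smul_mulVec,
        vecMulVec_mulVec', vecMulVec_mulVec', hdot1, hdot2]
      funext i
      simp only [Pi.smul_apply, Pi.add_apply, smul_eq_mul]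
      ring
    have e1 : colVec X s ⬝ᵥ μ₁ = g s := by rw [dotProduct_comm]; exact hdot1 s
    have e2 : colVec X s ⬝ᵥ μ₂ = α * g s := by rw [dotProduct_comm]; exact hdot2 s
    rw [hWv, dotProduct_add, dotProduct_smul, dotProduct_smul, e1, e2]
    simp only [smul_eq_mul, hQdef]
    ring
  have hsplit : ∀ f : Fin P → ℝ, ∑ r, f r =
      ∑ r ∈ S₁, f r + ∑ r ∈ S₂, f r + ∑ r ∈ (S₁ ∪ S₂)ᶜ, f r := by
    intro f
    rw [← Finset.sum_add_sum_compl (S₁ ∪ S₂) f, Finset.sum_union hdisj]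
  have hcards : (S₁ ∪ S₂).card = s₁ + s₂ := by
    rw [Finset.card_union_of_disjoint hdisj, hS₁, hS₂]
  have hle : s₁ + s₂ ≤ P := by
    have := Finset.card_le_univ (S₁ ∪ S₂)
    simpa [hcards, Fintype.card_fin] using this
  have hcardC : (((S₁ ∪ S₂)ᶜ).card : ℝ) = (P:ℝ) - s₁ - s₂ := by
    rw [Finset.card_compl, hcards, Fintype.card_fin, Nat.cast_sub hle]
    push_cast; ring
  set D : Fin P → ℝ := fun l => ∑ r, Real.exp (Q * (g r * g l)) with hDdef
  have hD : ∀ l, D l = s₁ * Real.exp (Q * g l) + s₂ * Real.exp (-(Q * g l))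
      + ((P:ℝ) - s₁ - s₂) := by
    intro l
    have e1 : (∑ r ∈ S₁, Real.exp (Q * (g r * g l))) = s₁ * Real.exp (Q * g l) := by
      have h : ∀ r ∈ S₁, Real.exp (Q * (g r * g l)) = Real.exp (Q * g l) := by
        intro r hr; rw [hgS₁ r hr, one_mul]
      rw [Finset.sum_congr rfl h, Finset.sum_const, hS₁, nsmul_eq_mul]
    have e2 : (∑ r ∈ S₂, Real.exp (Q * (g r * g l))) = s₂ * Real.exp (-(Q * g l)) := by
      have h : ∀ r ∈ S₂, Real.exp (Q * (g r * g l)) = Real.exp (-(Q * g l)) := by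
        intro r hr; rw [hgS₂ r hr]; congr 1; ring
      rw [Finset.sum_congr rfl h, Finset.sum_const, hS₂, nsmul_eq_mul]
    have e3 : (∑ r ∈ (S₁ ∪ S₂)ᶜ, Real.exp (Q * (g r * g l))) = (P:ℝ) - s₁ - s₂ := by
      have h : ∀ r ∈ (S₁ ∪ S₂)ᶜ, Real.exp (Q * (g r * g l)) = 1 := by
        intro r hr; rw [hgC r hr, zero_mul, mul_zero, Real.exp_zero]
      rw [Finset.sum_congr rfl h, Finset.sum_const, nsmul_eq_mul, mul_one, hcardC]
    show (∑ r, Real.exp (Q * (g r * g l))) = _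
    rw [hsplit (fun r => Real.exp (Q * (g r * g l))), e1, e2, e3]
  have hN : ∀ l, (∑ r, Real.exp (Q * (g r * g l)) * g r)
      = s₁ * Real.exp (Q * g l) - s₂ * Real.exp (-(Q * g l)) := by
    intro l
    have e1 : (∑ r ∈ S₁, Real.exp (Q * (g r * g l)) * g r) = s₁ * Real.exp (Q * g l) := by
      have h : ∀ r ∈ S₁, Real.exp (Q * (g r * g l)) * g r = Real.exp (Q * g l) := by
        intro r hr; rw [hgS₁ r hr, one_mul, mul_one]
      rw [Finset.sum_congr rfl h, Finset.sum_const, hS₁, nsmul_eq_mul]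
    have e2 : (∑ r ∈ S₂, Real.exp (Q * (g r * g l)) * g r)
        = -(s₂ * Real.exp (-(Q * g l))) := by
      have h : ∀ r ∈ S₂, Real.exp (Q * (g r * g l)) * g r = -Real.exp (-(Q * g l)) := by
        intro r hr
        rw [hgS₂ r hr, mul_neg_one]
        congr 1; ring
      rw [Finset.sum_congr rfl h, Finset.sum_const, hS₂, nsmul_eq_mul]
      ring
    have e3 : (∑ r ∈ (S₁ ∪ S₂)ᶜ, Real.exp (Q * (g r * g l)) * g r) = 0 := by
      have h : ∀ r ∈ (S₁ ∪ S₂)ᶜ, Real.exp (Q * (g r * g l)) * g r = 0 := by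
        intro r hr; rw [hgC r hr, mul_zero]
      rw [Finset.sum_congr rfl h, Finset.sum_const, smul_zero]
    rw [hsplit (fun r => Real.exp (Q * (g r * g l)) * g r), e1, e2, e3]
    ring
  set T : Fin P → ℝ := fun l =>
    (s₁ * Real.exp (Q * g l) - s₂ * Real.exp (-(Q * g l))) / D l with hTdef
  have hattn : ∀ s l, attnWeight X W s l = Real.exp (Q * (g s * g l)) / D l := by
    intro s l
    show Real.exp (colVec X s ⬝ᵥ (W *ᵥ colVec X l)) /
        (∑ r, Real.exp (colVec X r ⬝ᵥ (W *ᵥ colVec X l))) = _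
    rw [hscore s l, Finset.sum_congr rfl (fun r _ => by rw [hscore r l])]
  have hinner : ∀ l : Fin P,
      (∑ i, a i * max ((V *ᵥ ∑ s : Fin P, attnWeight X W s l • colVec X s) i) 0)
        = Real.sqrt m / 2 * (θ * (1 + lam * α) * T l) := by
    intro l
    set u : Fin d → ℝ := ∑ s : Fin P, attnWeight X W s l • colVec X s with hu
    have hsum1 : μ₁ ⬝ᵥ u = T l := by
      rw [hu, dot_sum_smul]
      calc (∑ s, attnWeight X W s l * (μ₁ ⬝ᵥ colVec X s))
          = ∑ s, Real.exp (Q * (g s * g l)) * g s / D l := by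
            refine Finset.sum_congr rfl fun s _ => ?_
            rw [hattn s l, hdot1 s]; ring
        _ = (∑ s, Real.exp (Q * (g s * g l)) * g s) / D l := by rw [Finset.sum_div]
        _ = T l := by rw [hN l]
    have hsum2 : μ₂ ⬝ᵥ u = α * T l := by
      rw [hu, dot_sum_smul]
      calc (∑ s, attnWeight X W s l * (μ₂ ⬝ᵥ colVec X s))
          = ∑ s, α * (Real.exp (Q * (g s * g l)) * g s / D l) := by
            refine Finset.sum_congr rfl fun s _ => ?_
            rw [hattn s l, hdot2 s]; ring
        _ = α * ((∑ s, Real.exp (Q * (g s * g l)) * g s) / D l) := by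
            rw [← Finset.mul_sum, Finset.sum_div]
        _ = α * T l := by rw [hN l]
    have hVu : ∀ i, (V *ᵥ u) i = Real.sign (a i) * (θ * (1 + lam * α) * T l) := by
      intro i
      show (∑ k, V i k * u k) = _
      calc (∑ k, V i k * u k)
          = ∑ k, (Real.sign (a i) * θ * (μ₁ k * u k) +
              Real.sign (a i) * θ * (lam * (μ₂ k * u k))) := by
            refine Finset.sum_congr rfl fun k _ => ?_
            rw [hV i k]; ring
        _ = Real.sign (a i) * θ * (μ₁ ⬝ᵥ u) +
              Real.sign (a i) * θ * (lam * (μ₂ ⬝ᵥ u)) := by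
            rw [Finset.sum_add_distrib, ← Finset.mul_sum, ← Finset.mul_sum]
            simp only [dotProduct]
            rw [← Finset.mul_sum]
        _ = Real.sign (a i) * (θ * (1 + lam * α) * T l) := by
            rw [hsum1, hsum2]; ring
    rw [Finset.sum_congr rfl (fun i _ => by rw [hVu i])]
    exact mlp_sum hm hme a A hA haA haA' _
  unfold transformer
  rw [Finset.sum_congr rfl (fun l _ => hinner l)]
  have hconst : (∑ l : Fin P, Real.sqrt m / 2 * (θ * (1 + lam * α) * T l))
      = Real.sqrt m / 2 * (θ * (1 + lam * α)) * ∑ l, T l := by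
    rw [Finset.mul_sum]
    exact Finset.sum_congr rfl fun l _ => by ring
  rw [hconst]
  have hT1 : ∀ l ∈ S₁, T l =
      ((s₁:ℝ) * Real.exp Q - s₂ * Real.exp (-Q)) /
        ((s₁:ℝ) * Real.exp Q + s₂ * Real.exp (-Q) + ((P:ℝ) - s₁ - s₂)) := by
    intro l hl
    show ((s₁:ℝ) * Real.exp (Q * g l) - s₂ * Real.exp (-(Q * g l))) / D l = _
    rw [hD l, hgS₁ l hl, mul_one]
  have hT2 : ∀ l ∈ S₂, T l =
      ((s₁:ℝ) * Real.exp (-Q) - s₂ * Real.exp Q) /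
        ((s₁:ℝ) * Real.exp (-Q) + s₂ * Real.exp Q + ((P:ℝ) - s₁ - s₂)) := by
    intro l hl
    show ((s₁:ℝ) * Real.exp (Q * g l) - s₂ * Real.exp (-(Q * g l))) / D l = _
    rw [hD l, hgS₂ l hl, mul_neg_one, neg_neg]
  have hT3 : ∀ l ∈ (S₁ ∪ S₂)ᶜ, T l = ((s₁:ℝ) - s₂) / P := by
    intro l hl
    show ((s₁:ℝ) * Real.exp (Q * g l) - s₂ * Real.exp (-(Q * g l))) / D l = _
    rw [hD l, hgC l hl, mul_zero, neg_zero, Real.exp_zero, mul_one, mul_one]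
    congr 1
    ring
  have hsumT : (∑ l, T l) =
      (s₁:ℝ) * (((s₁:ℝ) * Real.exp Q - s₂ * Real.exp (-Q)) /
        ((s₁:ℝ) * Real.exp Q + s₂ * Real.exp (-Q) + ((P:ℝ) - s₁ - s₂)))
      + (s₂:ℝ) * (((s₁:ℝ) * Real.exp (-Q) - s₂ * Real.exp Q) /
        ((s₁:ℝ) * Real.exp (-Q) + s₂ * Real.exp Q + ((P:ℝ) - s₁ - s₂)))
      + ((P:ℝ) - s₁ - s₂) * (((s₁:ℝ) - s₂) / P) := by
    rw [hsplit T, Finset.sum_congr rfl hT1, Finset.sum_congr rfl hT2,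
      Finset.sum_congr rfl hT3, Finset.sum_const, Finset.sum_const, Finset.sum_const,
      hS₁, hS₂, nsmul_eq_mul, nsmul_eq_mul, nsmul_eq_mul, hcardC]
  rw [hsumT]
  have heQ : Real.exp (-Q) = Real.exp (-(q * (1 + lam * α ^ 2))) := by rw [hQdef]
  rw [hQdef] at *
  ring
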